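/- Let 𝔤 = 𝔨 ⊕ 𝔞 ⊕ 𝔫 be an Iwasawa decomposition of a real semisimple Lie algebra with restricted root space decomposition 𝔤 = 𝔤₀ ⊕ ⨁_{α∈Σ} 𝔤_α, and let 𝔱₀ ⊆ 𝔨₀ = Z_𝔨(𝔞) be a subspace. Suppose 𝔰 ⊆ 𝔤 is a Lie subalgebra contained in 𝔱₀ ⊕ 𝔞 ⊕ 𝔫 that projects surjectively onto 𝔞 ⊕ 𝔫 along 𝔨. Then 𝔰 contains 𝔫. -/
import Mathlib


/-- If a Lie subalgebra `𝔰 ⊆ 𝔱₀ ⊕ 𝔞 ⊕ 𝔫` projects surjectively onto `𝔞 ⊕ 𝔫` along `𝔨`,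
then `𝔰` contains the whole nilpotent part `𝔫 = ⨁_{α ∈ Σ⁺} 𝔤_α`. -/
theorem stmt6 {L : Type*} [LieRing L] [LieAlgebra ℝ L] [Module.Finite ℝ L]
    -- the inner product `B_θ`
    (B : L →ₗ[ℝ] L →ₗ[ℝ] ℝ)
    (hBsymm : ∀ X Y : L, B X Y = B Y X)
    (hBpos : ∀ X : L, X ≠ 0 → 0 < B X X)
    (a t₀ : Submodule ℝ L)
    {ι : Type*} (g : ι → Submodule ℝ L)
    -- the positive restricted roots and root spaces
    (lam : ι → (↥a →ₗ[ℝ] ℝ))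
    (hroot : ∀ i, ∀ H : ↥a, ∀ Z ∈ g i, ⁅(H : L), Z⁆ = lam i H • Z)
    (hlam1 : ∀ i, ∃ H : ↥a, lam i H = 1)
    -- `𝔱₀ ⊆ 𝔨₀ = Z_𝔨(𝔞)`: abelian, commutes with `𝔞`, preserves each root space,
    -- and acts skew-symmetrically with respect to `B_θ`
    (ht₀a : ∀ Y ∈ t₀, ∀ H ∈ a, ⁅Y, H⁆ = 0)
    (ht₀ab : ∀ Y ∈ t₀, ∀ Y' ∈ t₀, ⁅Y, Y'⁆ = 0)
    (ht₀g : ∀ Y ∈ t₀, ∀ i, ∀ Z ∈ g i, ⁅Y, Z⁆ ∈ g i)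
    (ht₀skew : ∀ Y ∈ t₀, ∀ Z W : L, B ⁅Y, Z⁆ W = -B Z ⁅Y, W⁆)
    (s : LieSubalgebra ℝ L)
    (hsub : (s : Set L) ⊆ ((t₀ ⊔ a ⊔ (⨆ i, g i) : Submodule ℝ L) : Set L))
    -- `𝔰` projects surjectively onto `𝔞 ⊕ 𝔫` along `𝔨 ⊇ 𝔱₀`
    (hsurj : ∀ W ∈ (a ⊔ (⨆ i, g i) : Submodule ℝ L), ∃ Y ∈ t₀, Y + W ∈ s) :
    (⨆ i, g i : Submodule ℝ L) ≤ s.toSubmodule := by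
  rw [iSup_le_iff]
  intro i
  obtain ⟨H, hH⟩ := hlam1 i
  obtain ⟨Y₁, hY₁, hY₁H⟩ := hsurj (H : L) (Submodule.mem_sup_left H.2)
  -- the operator T Z = ⁅Y₁, Z⁆ on g i
  let T : ↥(g i) →ₗ[ℝ] ↥(g i) :=
    { toFun := fun Z => ⟨⁅Y₁, (Z : L)⁆, ht₀g Y₁ hY₁ i Z Z.2⟩
      map_add' := fun Z W => by ext; simp [lie_add]
      map_smul' := fun c Z => by ext; simp [lie_smul] }
  -- key: (1 + T) Z ∈ s for every Z ∈ g i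
  have key : ∀ Z : ↥(g i), (Z : L) + ⁅Y₁, (Z : L)⁆ ∈ s := by
    intro Z
    have hZsup : (Z : L) ∈ (a ⊔ (⨆ i, g i) : Submodule ℝ L) :=
      Submodule.mem_sup_right (Submodule.mem_iSup_of_mem i Z.2)
    obtain ⟨Y₂, hY₂, hY₂Z⟩ := hsurj (Z : L) hZsup
    have hbr : ⁅Y₁ + (H : L), Y₂ + (Z : L)⁆ ∈ s := s.lie_mem hY₁H hY₂Z
    have : ⁅Y₁ + (H : L), Y₂ + (Z : L)⁆ = (Z : L) + ⁅Y₁, (Z : L)⁆ := by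
      rw [add_lie, lie_add, lie_add, ht₀ab Y₁ hY₁ Y₂ hY₂,
        ← lie_skew (H : L) Y₂, ht₀a Y₂ hY₂ (H : L) H.2,
        hroot i H (Z : L) Z.2, hH, one_smul]
      abel
    rwa [this] at hbr
  -- 1 + T is injective, hence surjective
  have hinj : Function.Injective ((LinearMap.id + T : ↥(g i) →ₗ[ℝ] ↥(g i))) := by
    rw [← LinearMap.ker_eq_bot, LinearMap.ker_eq_bot']
    intro Z hZ
    have hZ' : ⁅Y₁, (Z : L)⁆ = -(Z : L) := by
      have h := congrArg (Subtype.val) hZ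
      simp only [LinearMap.add_apply, LinearMap.id_apply, Submodule.coe_add, T,
        LinearMap.coe_mk, AddHom.coe_mk, Submodule.coe_zero] at h
      exact eq_neg_of_add_eq_zero_right h
    by_contra hne
    have hZne : (Z : L) ≠ 0 := fun h => hne (Subtype.ext h)
    have h1 : B ⁅Y₁, (Z : L)⁆ (Z : L) = -B (Z : L) ⁅Y₁, (Z : L)⁆ :=
      ht₀skew Y₁ hY₁ _ _
    rw [hBsymm (Z : L) ⁅Y₁, (Z : L)⁆] at h1
    have h2 : B ⁅Y₁, (Z : L)⁆ (Z : L) = 0 := by linarith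
    rw [hZ'] at h2
    simp only [map_neg, LinearMap.neg_apply, neg_eq_zero] at h2
    exact absurd h2 (ne_of_gt (hBpos _ hZne))
  have : FiniteDimensional ℝ ↥(g i) := inferInstance
  have hsurjT : Function.Surjective ((LinearMap.id + T : ↥(g i) →ₗ[ℝ] ↥(g i))) :=
    (LinearMap.injective_iff_surjective).mp hinj
  intro Z hZ
  obtain ⟨W, hW⟩ := hsurjT ⟨Z, hZ⟩
  have : (W : L) + ⁅Y₁, (W : L)⁆ = Z := by
    have := congrArg (Subtype.val) hW
    simpa [T, add_comm] using this
  rw [← this]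
  exact key W
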